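/- Let $X$ be a finite measure space with measure $\lambda$, and let $u, v : X \to \mathbb{R}$ be bounded measurable functions. Then there exists $\xi \in [0,1]$ such that $\log\int_X e^{u+v}\,d\lambda \le \log\int_X e^{u}\,d\lambda + \int_X v\,\Lambda(u)\,d\lambda + \tfrac{1}{2}\int_X v^2\,\Lambda(u + \xi v)\,d\lambda$, where $\Lambda(w) = e^{w} / \int_X e^{w}\,d\lambda$ denotes the logit (Gibbs) density associated to $w$. -/

import Mathlib

open MeasureTheory

/-- The Gibbs (logit) density associated to a potential `w` under measure `μ`. -/
noncomputable def gibbsDensity {X : Type*} [MeasurableSpace X] (μ : Measure X)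
    (w : X → ℝ) : X → ℝ :=
  fun x => Real.exp (w x) / ∫ y, Real.exp (w y) ∂μ

/-- Taylor's theorem of order 2 with Lagrange remainder, on `[0,1]`, assuming
global derivatives. -/
lemma taylor2_aux {f f' f'' : ℝ → ℝ} (hf : ∀ t, HasDerivAt f (f' t) t)
    (hf' : ∀ t, HasDerivAt f' (f'' t) t) :
    ∃ ξ ∈ Set.Ioo (0:ℝ) 1, f 1 = f 0 + f' 0 + f'' ξ / 2 := by
  set M : ℝ := 2 * (f 1 - f 0 - f' 0) with hM
  set h : ℝ → ℝ := fun t => f t - f 0 - t * f' 0 - M * t ^ 2 / 2 with hh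
  set h' : ℝ → ℝ := fun t => f' t - f' 0 - M * t with hh'
  have hd : ∀ t, HasDerivAt h (h' t) t := by
    intro t
    have h2 := (((hf t).sub (hasDerivAt_const t (f 0))).sub
        ((hasDerivAt_id t).mul_const (f' 0))).sub
        (((hasDerivAt_pow 2 t).const_mul M).div_const 2)
    refine h2.congr_deriv ?_
    simp [hh']
    ring
  have hd' : ∀ t, HasDerivAt h' (f'' t - M) t := by
    intro t
    have h2 := ((hf' t).sub (hasDerivAt_const t (f' 0))).sub
        ((hasDerivAt_id t).const_mul M)
    refine h2.congr_deriv ?_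
    simp
  have h0 : h 0 = 0 := by simp [hh]
  have h1 : h 1 = 0 := by simp [hh, hM]
  obtain ⟨c, hc, hc0⟩ := exists_hasDerivAt_eq_zero (f' := h') one_pos
    (fun t _ => ((hd t).continuousAt).continuousWithinAt) (h0.trans h1.symm)
    (fun t _ => hd t)
  have h'0 : h' 0 = 0 := by simp [hh']
  obtain ⟨ξ, hξ, hξ0⟩ := exists_hasDerivAt_eq_zero (f' := fun t => f'' t - M) hc.1
    (fun t _ => ((hd' t).continuousAt).continuousWithinAt) (h'0.trans hc0.symm)
    (fun t _ => hd' t)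
  refine ⟨ξ, ⟨hξ.1, hξ.2.trans hc.2⟩, ?_⟩
  have : f'' ξ = M := by linarith
  rw [this, hM]; ring

lemma bdd_integrable {X : Type*} [MeasurableSpace X] (μ : Measure X) [IsFiniteMeasure μ]
    {f : X → ℝ} {C : ℝ} (hf : Measurable f) (hC : ∀ x, |f x| ≤ C) :
    Integrable f μ :=
  (integrable_const C).mono' hf.aestronglyMeasurable (ae_of_all _ hC)

/-- Differentiation under the integral sign for `t ↦ ∫ b x * exp (u x + t * v x)`. -/
lemma hasDerivAt_integral_mul_exp {X : Type*} [MeasurableSpace X] (μ : Measure X)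
    [IsFiniteMeasure μ] {u v b : X → ℝ} (hu : Measurable u) (hv : Measurable v)
    (hb : Measurable b) {Cu Cv D : ℝ} (hCu : ∀ x, |u x| ≤ Cu) (hCv : ∀ x, |v x| ≤ Cv)
    (hD : ∀ x, |b x| ≤ D) (t₀ : ℝ) :
    HasDerivAt (fun t => ∫ x, b x * Real.exp (u x + t * v x) ∂μ)
      (∫ x, (b x * v x) * Real.exp (u x + t₀ * v x) ∂μ) t₀ := by
  set Cu' : ℝ := max Cu 0 with hCu'
  set Cv' : ℝ := max Cv 0 with hCv'
  set D' : ℝ := max D 0 with hD'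
  have hCu'' : ∀ x, u x ≤ Cu' := fun x =>
    ((abs_le.1 (hCu x)).2).trans (le_max_left _ _)
  have hCv'' : ∀ x, |v x| ≤ Cv' := fun x => (hCv x).trans (le_max_left _ _)
  have hD'' : ∀ x, |b x| ≤ D' := fun x => (hD x).trans (le_max_left _ _)
  have hCv0 : 0 ≤ Cv' := le_max_right _ _
  have hD0 : 0 ≤ D' := le_max_right _ _
  have key : ∀ (t : ℝ) (x : X), u x + t * v x ≤ Cu' + |t| * Cv' := by
    intro t x
    have h1 : t * v x ≤ |t| * Cv' := by
      calc t * v x ≤ |t * v x| := le_abs_self _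
        _ = |t| * |v x| := abs_mul _ _
        _ ≤ |t| * Cv' := by
            exact mul_le_mul_of_nonneg_left (hCv'' x) (abs_nonneg t)
    linarith [hCu'' x]
  have habs : ∀ (t : ℝ) (x : X) (c : X → ℝ) (E : ℝ), (∀ y, |c y| ≤ E) →
      |c x * Real.exp (u x + t * v x)| ≤ E * Real.exp (Cu' + |t| * Cv') := by
    intro t x c E hE
    rw [abs_mul, Real.abs_exp]
    exact mul_le_mul (hE x) (Real.exp_le_exp.2 (key t x)) (Real.exp_nonneg _)
      (le_trans (abs_nonneg _) (hE x))
  refine (hasDerivAt_integral_of_dominated_loc_of_deriv_le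
    (F := fun t x => b x * Real.exp (u x + t * v x))
    (F' := fun t x => (b x * v x) * Real.exp (u x + t * v x))
    (bound := fun _ => (D' * Cv') * Real.exp (Cu' + (|t₀| + 1) * Cv'))
    (Metric.ball_mem_nhds t₀ one_pos) ?_ ?_ ?_ ?_ ?_ ?_).2
  · filter_upwards with t
    exact (hb.mul ((hu.add (hv.const_mul t)).exp)).aestronglyMeasurable
  · exact bdd_integrable μ (hb.mul ((hu.add (hv.const_mul t₀)).exp))
      (fun x => habs t₀ x b D' hD'')
  · exact ((hb.mul hv).mul ((hu.add (hv.const_mul t₀)).exp)).aestronglyMeasurable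
  · refine ae_of_all _ fun x t ht => ?_
    have hbv : ∀ y, |b y * v y| ≤ D' * Cv' := fun y => by
      rw [abs_mul]
      exact mul_le_mul (hD'' y) (hCv'' y) (abs_nonneg _) hD0
    have habs' := habs t x (fun y => b y * v y) (D' * Cv') hbv
    refine (Real.norm_eq_abs _ ▸ habs').trans ?_
    have ht' : |t| ≤ |t₀| + 1 := by
      have h1 : |t - t₀| < 1 := by
        simpa [Real.dist_eq] using Metric.mem_ball.1 ht
      have := abs_sub_abs_le_abs_sub t t₀
      linarith
    have : Cu' + |t| * Cv' ≤ Cu' + (|t₀| + 1) * Cv' := by nlinarith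
    exact mul_le_mul_of_nonneg_left (Real.exp_le_exp.2 this) (by positivity)
  · exact integrable_const _
  · refine ae_of_all _ fun x t _ => ?_
    have h1 : HasDerivAt (fun t : ℝ => u x + t * v x) (v x) t :=
      (hasDerivAt_mul_const (v x)).const_add (u x)
    have h2 := (h1.exp).const_mul (b x)
    refine h2.congr_deriv ?_
    ring

theorem logsumexp_second_order_bound
    {X : Type*} [MeasurableSpace X] (μ : Measure X) [IsFiniteMeasure μ]
    (u v : X → ℝ) (hu : Measurable u) (hv : Measurable v)
    (hub : ∃ C, ∀ x, |u x| ≤ C) (hvb : ∃ C, ∀ x, |v x| ≤ C) :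
    ∃ ξ ∈ Set.Icc (0:ℝ) 1,
      Real.log (∫ x, Real.exp (u x + v x) ∂μ)
        ≤ Real.log (∫ x, Real.exp (u x) ∂μ)
          + ∫ x, v x * gibbsDensity μ u x ∂μ
          + (1/2) * ∫ x, (v x) ^ 2 * gibbsDensity μ (fun y => u y + ξ * v y) x ∂μ := by
  rcases eq_or_ne μ 0 with hμ | hμ
  · exact ⟨0, Set.left_mem_Icc.2 zero_le_one, by simp [hμ]⟩
  obtain ⟨Cu, hCu⟩ := hub
  obtain ⟨Cv, hCv⟩ := hvb
  set F : ℝ → ℝ := fun t => ∫ x, Real.exp (u x + t * v x) ∂μ with hF_def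
  set F₁ : ℝ → ℝ := fun t => ∫ x, v x * Real.exp (u x + t * v x) ∂μ with hF₁_def
  set F₂ : ℝ → ℝ := fun t => ∫ x, (v x) ^ 2 * Real.exp (u x + t * v x) ∂μ with hF₂_def
  have hF : ∀ t, HasDerivAt F (F₁ t) t := by
    intro t
    have h := hasDerivAt_integral_mul_exp μ (b := fun _ => (1:ℝ)) hu hv measurable_const
      hCu hCv (D := 1) (fun x => by norm_num) t
    simp only [one_mul] at h
    exact h
  have hF₁ : ∀ t, HasDerivAt F₁ (F₂ t) t := by
    intro t
    have h := hasDerivAt_integral_mul_exp μ (b := v) hu hv hv hCu hCv hCv t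
    simp only [← sq] at h
    exact h
  have hFpos : ∀ t, 0 < F t := by
    intro t
    have hint : Integrable (fun x => Real.exp (u x + t * v x)) μ := by
      refine bdd_integrable μ ((hu.add (hv.const_mul t)).exp)
        (C := Real.exp (max Cu 0 + |t| * max Cv 0)) fun x => ?_
      rw [Real.abs_exp]
      refine Real.exp_le_exp.2 ?_
      have h1 : t * v x ≤ |t| * max Cv 0 := by
        calc t * v x ≤ |t * v x| := le_abs_self _
          _ = |t| * |v x| := abs_mul _ _
          _ ≤ |t| * max Cv 0 :=
              mul_le_mul_of_nonneg_left ((hCv x).trans (le_max_left _ _)) (abs_nonneg t)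
      have h2 : u x ≤ max Cu 0 := ((abs_le.1 (hCu x)).2).trans (le_max_left _ _)
      linarith
    rw [hF_def]
    rw [integral_pos_iff_support_of_nonneg (fun x => (Real.exp_pos _).le) hint]
    have : Function.support (fun x => Real.exp (u x + t * v x)) = Set.univ := by
      ext x; simp [Function.support, Real.exp_ne_zero]
    rw [this]
    exact Measure.measure_univ_pos.2 hμ
  have hφ : ∀ t, HasDerivAt (fun t => Real.log (F t)) (F₁ t / F t) t :=
    fun t => (hF t).log (hFpos t).ne'
  have hφ' : ∀ t, HasDerivAt (fun t => F₁ t / F t)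
      ((F₂ t * F t - F₁ t * F₁ t) / F t ^ 2) t :=
    fun t => (hF₁ t).div (hF t) (hFpos t).ne'
  obtain ⟨ξ, hξ, heq⟩ := taylor2_aux hφ hφ'
  refine ⟨ξ, ⟨hξ.1.le, hξ.2.le⟩, ?_⟩
  have hgibbs : ∀ (f w : X → ℝ),
      ∫ x, f x * gibbsDensity μ w x ∂μ
        = (∫ x, f x * Real.exp (w x) ∂μ) / (∫ x, Real.exp (w x) ∂μ) := by
    intro f w
    simp only [gibbsDensity, ← mul_div_assoc]
    exact integral_div _ _
  have hR : (F₂ ξ * F ξ - F₁ ξ * F₁ ξ) / F ξ ^ 2 ≤ F₂ ξ / F ξ := by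
    rw [div_le_div_iff₀ (pow_pos (hFpos ξ) 2) (hFpos ξ)]
    nlinarith [sq_nonneg (F₁ ξ), sq_nonneg (F ξ), hFpos ξ]
  have e1 : F 1 = ∫ x, Real.exp (u x + v x) ∂μ := by simp [hF_def]
  have e0 : F 0 = ∫ x, Real.exp (u x) ∂μ := by simp [hF_def]
  have e2 : F₁ 0 / F 0 = ∫ x, v x * gibbsDensity μ u x ∂μ := by
    rw [hgibbs v u]
    simp [hF₁_def, hF_def]
  have e3 : F₂ ξ / F ξ = ∫ x, (v x) ^ 2 * gibbsDensity μ (fun y => u y + ξ * v y) x ∂μ := by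
    rw [hgibbs (fun x => (v x) ^ 2) (fun y => u y + ξ * v y)]
  rw [e1, e2, e0] at heq
  rw [heq]
  rw [← e3]
  linarith
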